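/- Let α be real, and define the Størmer state σ_α on ℂ³ ⊗ ℂ³ (a matrix indexed by Fin 3 × Fin 3) by σ_α = (2/7)|ψ₊⟩⟨ψ₊| + (α/7)σ₊ + ((5−α)/7)σ₋, where ψ₊ = (|00⟩+|11⟩+|22⟩)/√3, σ₊ = (|01⟩⟨01| + |12⟩⟨12| + |20⟩⟨20|)/3 and σ₋ = (|10⟩⟨10| + |21⟩⟨21| + |02⟩⟨02|)/3. Then: (i) both partial traces of σ_α equal (1/3)·I₃, so each one-qutrit reduced purity is 1/3; (ii) tr σ_α² = (2α² − 10α + 37)/147; (iii) tr σ_α² > 1/3 if and only if α < −1 or α > 6; in particular, for all α with 2 ≤ α ≤ 5 one has tr σ_α² ≤ tr (σ_α)_A² and tr σ_α² ≤ tr (σ_α)_B². -/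
import Mathlib


open scoped ComplexOrder

noncomputable section

/-- The pure-state density matrix `|Φ⟩⟨Φ|`. -/
def pureMat {α : Type*} (Φ : α → ℂ) : Matrix α α ℂ :=
  Matrix.of fun a b => Φ a * (starRingEnd ℂ) (Φ b)

/-- The standard basis vector `|xy⟩` of `ℂ³ ⊗ ℂ³`. -/
def ket3 (x y : Fin 3) : (Fin 3 × Fin 3) → ℂ := fun a => if a = (x, y) then 1 else 0

/-- The maximally entangled state `ψ₊ = (|00⟩ + |11⟩ + |22⟩)/√3`. -/
def ψp3 : (Fin 3 × Fin 3) → ℂ := fun a => if a.1 = a.2 then (Real.sqrt 3 : ℂ)⁻¹ else 0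

/-- `σ₊ = (|01⟩⟨01| + |12⟩⟨12| + |20⟩⟨20|)/3`. -/
def σplus : Matrix (Fin 3 × Fin 3) (Fin 3 × Fin 3) ℂ :=
  (3 : ℂ)⁻¹ • (pureMat (ket3 0 1) + pureMat (ket3 1 2) + pureMat (ket3 2 0))

/-- `σ₋ = (|10⟩⟨10| + |21⟩⟨21| + |02⟩⟨02|)/3`. -/
def σminus : Matrix (Fin 3 × Fin 3) (Fin 3 × Fin 3) ℂ :=
  (3 : ℂ)⁻¹ • (pureMat (ket3 1 0) + pureMat (ket3 2 1) + pureMat (ket3 0 2))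

/-- The Størmer state `σ_α = (2/7)|ψ₊⟩⟨ψ₊| + (α/7)σ₊ + ((5−α)/7)σ₋`. -/
def stormer (α : ℝ) : Matrix (Fin 3 × Fin 3) (Fin 3 × Fin 3) ℂ :=
  (2 / 7 : ℂ) • pureMat ψp3 + ((α : ℂ) / 7) • σplus + (((5 - α : ℝ) : ℂ) / 7) • σminus

/-- Partial trace over the second factor. -/
def ptA (ρ : Matrix (Fin 3 × Fin 3) (Fin 3 × Fin 3) ℂ) : Matrix (Fin 3) (Fin 3) ℂ :=
  Matrix.of fun x x' => ∑ y : Fin 3, ρ (x, y) (x', y)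

/-- Partial trace over the first factor. -/
def ptB (ρ : Matrix (Fin 3 × Fin 3) (Fin 3 × Fin 3) ℂ) : Matrix (Fin 3) (Fin 3) ℂ :=
  Matrix.of fun y y' => ∑ x : Fin 3, ρ (x, y) (x, y')

lemma hs : (((Real.sqrt 3 : ℝ) : ℂ))⁻¹ * (((Real.sqrt 3 : ℝ) : ℂ))⁻¹ = (3:ℂ)⁻¹ := by
  rw [← mul_inv, ← Complex.ofReal_mul, Real.mul_self_sqrt (by norm_num)]; norm_num

/-- Closed-form entries of the Størmer state. -/
def sM (α : ℝ) : Matrix (Fin 3 × Fin 3) (Fin 3 × Fin 3) ℂ :=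
  Matrix.of fun a b =>
    (if a.1 = a.2 ∧ b.1 = b.2 then (2/21 : ℂ) else 0)
    + (if a = b ∧ (a = (0,1) ∨ a = (1,2) ∨ a = (2,0)) then ((α:ℂ)/21) else 0)
    + (if a = b ∧ (a = (1,0) ∨ a = (2,1) ∨ a = (0,2)) then (((5-α:ℝ):ℂ)/21) else 0)

set_option linter.unreachableTactic false in
set_option linter.unusedTactic false in
lemma stormer_eq (α : ℝ) : stormer α = sM α := by
  ext ⟨a1,a2⟩ ⟨b1,b2⟩
  simp only [stormer, sM, σplus, σminus, pureMat, ket3, ψp3, Matrix.add_apply,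
    Matrix.smul_apply, Matrix.of_apply, smul_eq_mul, Prod.mk.injEq]
  fin_cases a1 <;> fin_cases a2 <;> fin_cases b1 <;> fin_cases b2 <;>
    simp_all [Prod.ext_iff, hs] <;> ring_nf <;> rw [hs] <;> ring

lemma ptA_sM (α : ℝ) : ptA (sM α) = (3 : ℂ)⁻¹ • 1 := by
  ext x x'
  fin_cases x <;> fin_cases x' <;>
    simp [ptA, sM, Fin.sum_univ_three, Matrix.one_apply, Prod.ext_iff] <;> ring

lemma ptB_sM (α : ℝ) : ptB (sM α) = (3 : ℂ)⁻¹ • 1 := by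
  ext x x'
  fin_cases x <;> fin_cases x' <;>
    simp [ptB, sM, Fin.sum_univ_three, Matrix.one_apply, Prod.ext_iff] <;> ring

lemma tr_sq (α : ℝ) : (sM α * sM α).trace = (((2 * α ^ 2 - 10 * α + 37) / 147 : ℝ) : ℂ) := by
  simp [Matrix.trace, Matrix.mul_apply, Matrix.diag, Fintype.sum_prod_type,
    Fin.sum_univ_three, sM, Prod.ext_iff]
  ring

lemma tr_id : (((3 : ℂ)⁻¹ • (1 : Matrix (Fin 3) (Fin 3) ℂ)) * ((3 : ℂ)⁻¹ • 1)).trace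
    = (3 : ℂ)⁻¹ := by
  simp [Matrix.trace, Matrix.mul_apply, Matrix.diag, Fin.sum_univ_three, Matrix.one_apply]

lemma real_iff (α : ℝ) : (1/3 : ℝ) < (2 * α ^ 2 - 10 * α + 37) / 147 ↔ α < -1 ∨ 6 < α := by
  constructor
  · intro h
    by_contra hc
    push_neg at hc
    nlinarith [hc.1, hc.2]
  · rintro (h | h) <;> nlinarith

/-- Properties of the Størmer state: (i) both one-qutrit reductions are maximally mixed,
of purity `1/3`; (ii) its purity is `(2α² − 10α + 37)/147`; (iii) the purity exceeds `1/3`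
iff `α < −1` or `α > 6`; in particular for `2 ≤ α ≤ 5` the purity-based criterion fails. -/
theorem stormer_properties (α : ℝ) :
    (ptA (stormer α) = (3 : ℂ)⁻¹ • 1 ∧ ptB (stormer α) = (3 : ℂ)⁻¹ • 1 ∧
      (ptA (stormer α) * ptA (stormer α)).trace = (3 : ℂ)⁻¹ ∧
      (ptB (stormer α) * ptB (stormer α)).trace = (3 : ℂ)⁻¹) ∧
    ((stormer α * stormer α).trace = (((2 * α ^ 2 - 10 * α + 37) / 147 : ℝ) : ℂ)) ∧
    ((1 / 3 : ℂ) < (stormer α * stormer α).trace ↔ α < -1 ∨ 6 < α) ∧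
    (2 ≤ α → α ≤ 5 →
      (stormer α * stormer α).trace ≤ (ptA (stormer α) * ptA (stormer α)).trace ∧
      (stormer α * stormer α).trace ≤ (ptB (stormer α) * ptB (stormer α)).trace) := by
  rw [stormer_eq, ptA_sM, ptB_sM, tr_sq, tr_id]
  refine ⟨⟨rfl, rfl, rfl, rfl⟩, rfl, ?_, ?_⟩
  · rw [show (1/3 : ℂ) = ((1/3 : ℝ) : ℂ) by norm_num, Complex.real_lt_real]
    exact real_iff α
  · intro h2 h5
    have : (((2 * α ^ 2 - 10 * α + 37) / 147 : ℝ) : ℂ) ≤ (((3:ℝ)⁻¹ : ℝ) : ℂ) := by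
      rw [Complex.real_le_real]
      nlinarith
    simp only [Complex.ofReal_inv, Complex.ofReal_ofNat] at this
    exact ⟨this, this⟩
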